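/- Let G be a locally compact second countable abelian group, let P₀ ⊆ G be a closed U-uniformly discrete set, and let P be any element of the punctured hull Ω×_{P₀} = (closure of the G-orbit of P₀ in the Chabauty space of closed subsets of G) minus {∅}. Then P − P ⊆ closure(P₀ − P₀). -/

import Mathlib

open scoped Pointwise
open Set Filter Topology

/-- Convergence `P_n → P` in the Chabauty topology, via its sequential characterization:
(i) every convergent sequence of points `p_k ∈ P_{n_k}` (along a subsequence) has its limit in
`P`, and (ii) every point of `P` is a limit of points `p_n ∈ P_n`. -/
def ChabautyTendsto {G : Type*} [TopologicalSpace G] (Pn : ℕ → Set G) (P : Set G) : Prop :=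
  (∀ φ : ℕ → ℕ, StrictMono φ → ∀ (p : ℕ → G) (x : G),
    (∀ k, p k ∈ Pn (φ k)) → Tendsto p atTop (𝓝 x) → x ∈ P) ∧
  (∀ x ∈ P, ∃ p : ℕ → G, (∀ n, p n ∈ Pn n) ∧ Tendsto p atTop (𝓝 x))

/-- `P` belongs to the hull of `P₀`, i.e. it is a Chabauty limit of translates `P₀ - g_n`. -/
def InHull {G : Type*} [AddCommGroup G] [TopologicalSpace G] (P₀ P : Set G) : Prop :=
  ∃ g : ℕ → G, ChabautyTendsto (fun n => P₀ - ({g n} : Set G)) P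

/-- If `P₀` is a closed `U`-uniformly discrete set and `P` is a nonempty element of the
(punctured) hull of `P₀`, then `P - P ⊆ closure (P₀ - P₀)`. -/
theorem stmt7 {G : Type*} [AddCommGroup G] [TopologicalSpace G] [IsTopologicalAddGroup G]
    [LocallyCompactSpace G] [SecondCountableTopology G]
    (U : Set G) (hUo : IsOpen U) (hU0 : (0 : G) ∈ U)
    (P₀ : Set G) (hcl : IsClosed P₀) (hud : (P₀ - P₀) ∩ U = {0})
    (P : Set G) (hP : InHull P₀ P) (hPne : P.Nonempty) :
    P - P ⊆ closure (P₀ - P₀) := by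
  obtain ⟨g, _, h2⟩ := hP
  rintro z ⟨x, hx, y, hy, rfl⟩
  obtain ⟨p, hp, hpx⟩ := h2 x hx
  obtain ⟨q, hq, hqy⟩ := h2 y hy
  have hmem : ∀ n, p n - q n ∈ P₀ - P₀ := by
    intro n
    obtain ⟨a, ha, b, hb, hab⟩ := hp n
    obtain ⟨c, hc, d, hd, hcd⟩ := hq n
    simp only [mem_singleton_iff] at hb hd
    subst hb hd
    exact ⟨a, ha, c, hc, by rw [← hab, ← hcd]; beta_reduce; abel⟩
  exact mem_closure_of_tendsto (hpx.sub hqy) (Eventually.of_forall hmem)
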